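/- Let a, b, c be rational with s = a+b+c, p = abc ≠ 0. If x, y, z are rationals with x + y + z = s, xyz = p, then u = -p/y + s²/12 and v = -(p/y)(x + y/2 - s/2) satisfy v² = u³ - (s⁴/48 - sp/2)u + (s⁶/864 - s³p/24 + p²/4), and u ≠ s²/12. -/

import Mathlib

theorem stmt_8 (a b c : ℚ) (s p : ℚ)
    (hs : s = a + b + c) (hp : p = a * b * c) (hp0 : p ≠ 0)
    (x y z : ℚ) (hsum : x + y + z = s) (hprod : x * y * z = p)
    (u v : ℚ) (hu : u = -p / y + s ^ 2 / 12)
    (hv : v = -(p / y) * (x + y / 2 - s / 2)) :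
    v ^ 2 = u ^ 3 - (s ^ 4 / 48 - s * p / 2) * u +
      (s ^ 6 / 864 - s ^ 3 * p / 24 + p ^ 2 / 4) ∧ u ≠ s ^ 2 / 12 := by
  have hxyz : x * y * z ≠ 0 := by rw [hprod]; exact hp0
  have hy : y ≠ 0 := fun h => hxyz (by simp [h])
  subst hu hv hsum hprod
  constructor
  · field_simp
    ring
  · intro h
    have h2 : -(x * y * z) / y = 0 := by linarith
    have : x * y * z = 0 := by
      field_simp at h2
      linear_combination -y * h2
    exact hxyz this
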